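/- arXiv:math/0609411 — 2 statements merged into one kernel-verified Lean document; each statement's English description precedes it below -/
import Mathlib

section
/- Let R be a principal ideal domain with field of fractions K. Suppose A is a finitely generated torsion R-module equipped with a nondegenerate symmetric linking form, i.e., an R-module isomorphism Ψ : A → Hom_R(A, K/R). Then for any proper submodule B ⊊ A, the orthogonal complement B^⊥ = { y ∈ A : Ψ(x)(y) = 0 for all x ∈ B } is nontrivial. -/
/-- The quotient `R`-module `K/R` where `K` is the field of fractions of `R`. -/
abbrev QuotField (R : Type*) [CommRing R] [IsDomain R] :=
  FractionRing R ⧸ LinearMap.range (Algebra.linearMap R (FractionRing R))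

lemma baer_quotField (R : Type*) [CommRing R] [IsDomain R] [IsPrincipalIdealRing R] :
    Module.Baer R (QuotField R) := by
  intro I g
  obtain ⟨m, rfl⟩ := IsPrincipalIdealRing.principal I
  rcases eq_or_ne m 0 with rfl | h0
  · refine ⟨0, fun n hn ↦ ?_⟩
    rw [Submodule.span_zero_singleton] at hn
    subst hn
    exact (map_zero g).symm
  · obtain ⟨k, hk⟩ := Submodule.Quotient.mk_surjective _
      (g ⟨m, Submodule.mem_span_singleton_self m⟩)
    have hm : algebraMap R (FractionRing R) m ≠ 0 :=
      (map_ne_zero_iff _ (IsFractionRing.injective R _)).mpr h0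
    refine ⟨LinearMap.toSpanSingleton R _
      (Submodule.Quotient.mk (k / algebraMap R (FractionRing R) m)), fun n hn ↦ ?_⟩
    obtain ⟨a, rfl⟩ := Submodule.mem_span_singleton.mp hn
    have : (⟨a • m, hn⟩ : Submodule.span R {m}) = a • ⟨m, Submodule.mem_span_singleton_self m⟩ :=
      rfl
    rw [this, map_smul, map_smul, ← hk, LinearMap.toSpanSingleton_apply]
    congr 1
    rw [← Submodule.Quotient.mk_smul]
    congr 1
    rw [Algebra.smul_def, mul_div_cancel₀ _ hm]

theorem linking_form_orthogonal_complement_nontrivial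
    (R : Type*) [CommRing R] [IsDomain R] [IsPrincipalIdealRing R]
    (A : Type*) [AddCommGroup A] [Module R A] [Module.Finite R A]
    (htors : Module.IsTorsion R A)
    (Ψ : A ≃ₗ[R] (A →ₗ[R] QuotField R))
    (hsymm : ∀ x y : A, Ψ x y = Ψ y x)
    (B : Submodule R A) (hB : B ≠ ⊤) :
    ∃ y : A, y ≠ 0 ∧ ∀ x ∈ B, Ψ x y = 0 := by
  classical
  -- pick an element outside B
  obtain ⟨a, ha⟩ : ∃ a, a ∉ B := by
    by_contra h
    push_neg at h
    exact hB (eq_top_iff.mpr fun x _ => h x)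
  set m : A ⧸ B := B.mkQ a with hm_def
  have hm : m ≠ 0 := fun h => ha ((Submodule.Quotient.mk_eq_zero B).mp h)
  -- torsion element annihilating m
  obtain ⟨r, hr⟩ := @htors a
  have hr0 : (r : R) ≠ 0 := nonZeroDivisors.coe_ne_zero r
  have hrm : (r : R) • m = 0 := by
    have h' : (r : R) • a = 0 := hr
    rw [hm_def, ← map_smul, h', map_zero]
  -- the annihilator ideal of m and its generator b
  set J : Ideal R := LinearMap.ker (LinearMap.toSpanSingleton R (A ⧸ B) m) with hJ_def
  obtain ⟨b, hbJ⟩ := IsPrincipalIdealRing.principal J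
  have hrJ : (r : R) ∈ J := by
    simpa [hJ_def, LinearMap.mem_ker, LinearMap.toSpanSingleton_apply] using hrm
  have hb0 : b ≠ 0 := by
    rintro rfl
    rw [hbJ] at hrJ
    simp only [Submodule.span_zero_singleton, Submodule.mem_bot] at hrJ
    exact hr0 hrJ
  have hbm : b • m = 0 := by
    have : b ∈ J := hbJ ▸ Submodule.mem_span_singleton_self b
    simpa [hJ_def, LinearMap.mem_ker, LinearMap.toSpanSingleton_apply] using this
  have hbu : ¬IsUnit b := by
    intro hu
    obtain ⟨u, rfl⟩ := hu
    apply hm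
    have := congrArg (fun x => (u⁻¹ : Rˣ) • x) hbm
    simpa [smul_smul, Units.smul_def] using this
  -- the element z = [1/b] in K/R is nonzero
  have hbK : algebraMap R (FractionRing R) b ≠ 0 :=
    (map_ne_zero_iff _ (IsFractionRing.injective R _)).mpr hb0
  set z : QuotField R := Submodule.Quotient.mk ((algebraMap R (FractionRing R) b)⁻¹) with hz_def
  have hz : z ≠ 0 := by
    intro h
    rw [hz_def, Submodule.Quotient.mk_eq_zero] at h
    obtain ⟨c, hc⟩ := h
    apply hbu
    refine IsUnit.of_mul_eq_one (a := b) c ?_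
    apply IsFractionRing.injective R (FractionRing R)
    simp only [Algebra.linearMap_apply] at hc
    rw [map_mul, map_one, hc, mul_inv_cancel₀ hbK]
  -- the map R/J → K/R sending 1 to z
  have hJker : J ≤ LinearMap.ker (LinearMap.toSpanSingleton R (QuotField R) z) := by
    intro s hs
    rw [hbJ, Submodule.mem_span_singleton] at hs
    obtain ⟨c, rfl⟩ := hs
    rw [LinearMap.mem_ker, LinearMap.toSpanSingleton_apply, hz_def, smul_eq_mul,
      ← Submodule.Quotient.mk_smul]
    rw [Submodule.Quotient.mk_eq_zero]
    refine ⟨c, ?_⟩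
    simp only [Algebra.linearMap_apply]
    rw [Algebra.smul_def, map_mul, mul_assoc, mul_inv_cancel₀ hbK, mul_one]
  set g : (R ⧸ J) →ₗ[R] QuotField R :=
    J.liftQ (LinearMap.toSpanSingleton R (QuotField R) z) hJker with hg_def
  -- the injective map R/J → A/B sending 1 to m
  set fJ : (R ⧸ J) →ₗ[R] (A ⧸ B) :=
    J.liftQ (LinearMap.toSpanSingleton R (A ⧸ B) m) le_rfl with hfJ_def
  have hfJinj : Function.Injective fJ := by
    rw [← LinearMap.ker_eq_bot, hfJ_def]
    exact Submodule.ker_liftQ_eq_bot _ _ _ le_rfl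
  -- extend g along fJ using injectivity (Baer) of K/R
  obtain ⟨F, hF⟩ := (baer_quotField R).extension_property fJ hfJinj g
  set f : A →ₗ[R] QuotField R := F ∘ₗ B.mkQ with hf_def
  have hfa : f a = z := by
    have h1 : fJ (Submodule.Quotient.mk 1) = m := by
      rw [hfJ_def, Submodule.liftQ_apply, LinearMap.toSpanSingleton_apply, one_smul]
    have h2 : F m = g (Submodule.Quotient.mk 1) := by
      rw [← h1]
      exact congrFun (congrArg (fun (h : _ →ₗ[R] _) => h.toFun) hF) _
    rw [hf_def]
    simp only [LinearMap.comp_apply]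
    rw [show B.mkQ a = m from rfl, h2, hg_def, Submodule.liftQ_apply,
      LinearMap.toSpanSingleton_apply, one_smul]
  refine ⟨Ψ.symm f, ?_, ?_⟩
  · intro h
    have : f = 0 := by
      have := congrArg Ψ h
      rwa [Ψ.apply_symm_apply, map_zero] at this
    rw [this] at hfa
    exact hz (by simpa using hfa.symm)
  · intro x hx
    rw [hsymm x (Ψ.symm f), Ψ.apply_symm_apply]
    rw [hf_def]
    simp only [LinearMap.comp_apply]
    have hx0 : B.mkQ x = 0 := (Submodule.Quotient.mk_eq_zero B).mpr hx
    rw [hx0, map_zero]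
end

section
/- Let R be a principal ideal domain with field of fractions K, and let A be a nontrivial finitely generated torsion R-module. Then Hom_R(A, K/R) is nontrivial. -/
lemma quot_hom_of_nonunit (R : Type*) [CommRing R] [IsDomain R]
    {q : R} (hq0 : q ≠ 0) (hqu : ¬ IsUnit q) :
    ∃ g : (R ⧸ (R ∙ q)) →ₗ[R] QuotField R,
      g (Submodule.Quotient.mk 1) ≠ 0 := by
  set K := FractionRing R
  set y : K := (algebraMap R K q)⁻¹
  set h : R →ₗ[R] QuotField R :=
    (Submodule.mkQ _) ∘ₗ (LinearMap.toSpanSingleton R K y)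
  have hker : (R ∙ q) ≤ LinearMap.ker h := by
    rw [Submodule.span_singleton_le_iff_mem, LinearMap.mem_ker]
    have : (q : R) • y = 1 := by
      rw [Algebra.smul_def]
      exact mul_inv_cancel₀ (by
        simpa using (IsFractionRing.injective R K).ne_iff.mpr hq0)
    simp only [h, LinearMap.comp_apply, LinearMap.toSpanSingleton_apply, this,
      Submodule.mkQ_apply, Submodule.Quotient.mk_eq_zero]
    exact ⟨1, by simp⟩
  refine ⟨Submodule.liftQ _ h hker, ?_⟩
  rw [Submodule.liftQ_apply]
  simp only [h, LinearMap.comp_apply, LinearMap.toSpanSingleton_apply, one_smul,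
    Submodule.mkQ_apply, ne_eq, Submodule.Quotient.mk_eq_zero]
  rintro ⟨r, hr⟩
  apply hqu
  have : algebraMap R K (r * q) = 1 := by
    rw [map_mul]
    simp only [Algebra.linearMap_apply] at hr
    rw [hr]
    exact inv_mul_cancel₀ (by
      simpa using (IsFractionRing.injective R K).ne_iff.mpr hq0)
  have : r * q = 1 := IsFractionRing.injective R K (by simpa using this)
  exact IsUnit.of_mul_eq_one (a := q) r (by linear_combination this)

theorem exists_nonzero_hom_to_quotField
    (R : Type*) [CommRing R] [IsDomain R] [IsPrincipalIdealRing R]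
    (A : Type*) [AddCommGroup A] [Module R A] [Module.Finite R A]
    [Nontrivial A] (htors : Module.IsTorsion R A) :
    ∃ f : A →ₗ[R] QuotField R, f ≠ 0 := by
  have htors' : Module.IsTorsion R (ULift.{u_1} A) := fun x => by
    obtain ⟨r, hr⟩ := @htors x.down
    exact ⟨r, by
      apply ULift.ext
      simpa using hr⟩
  obtain ⟨ι, _, p, hp, e, ⟨l₀⟩⟩ :=
    Module.equiv_directSum_of_isTorsion (M := ULift.{u_1} A) htors'
  have l := (ULift.moduleEquiv (R := R) (M := A)).symm.trans l₀
  -- some component is nontrivial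
  have : ∃ i : ι, Nontrivial (R ⧸ (R ∙ p i ^ e i)) := by
    by_contra hcon
    push_neg at hcon
    have : ∀ i, Subsingleton (R ⧸ (R ∙ p i ^ e i)) := fun i =>
      hcon i
    have : Subsingleton (DirectSum ι fun i => R ⧸ (R ∙ p i ^ e i)) := inferInstance
    have : Subsingleton A := l.toEquiv.subsingleton
    exact (not_subsingleton A) this
  obtain ⟨i, hi⟩ := this
  have hq0 : p i ^ e i ≠ 0 := pow_ne_zero _ (hp i).ne_zero
  have hqu : ¬ IsUnit (p i ^ e i) := by
    intro hu
    have : (R ∙ p i ^ e i) = ⊤ := Ideal.span_singleton_eq_top.mpr hu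
    rw [this] at hi
    exact (not_nontrivial_iff_subsingleton.mpr inferInstance) hi
  classical
  obtain ⟨g, hg⟩ := quot_hom_of_nonunit R hq0 hqu
  refine ⟨g ∘ₗ (DirectSum.component R ι _ i) ∘ₗ l.toLinearMap, ?_⟩
  intro hf
  apply hg
  have := congrArg (fun f => f (l.symm (DirectSum.lof R ι _ i (Submodule.Quotient.mk 1)))) hf
  simp only [LinearMap.comp_apply, LinearEquiv.coe_coe, LinearEquiv.apply_symm_apply,
    DirectSum.component.lof_self, LinearMap.zero_apply] at this
  exact this
end
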